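/- Let 0 < γ, and for t = 1,…,n let a_t be random arms adapted to a filtration, with conditional law q_t over [K] satisfying q_t(a) = f(a) for a fixed vector f with f(a) ≥ 0 and ∑_a f(a) ≤ 1. Then E[∑_{t=1}^n 1/(f(a_t) + γ) | history] ≤ Kn, each term 1/(f(a_t)+γ) ≤ 1/γ, and E[(1/(f(a_t)+γ))^2 | history] ≤ ∑_a 1/(f(a)+γ). Consequently, by Freedman's inequality with λ = γ, with probability at least 1 − δ: ∑_{t=1}^n 1/(f(a_t)+γ) ≤ 2Kn + (1/γ)log(1/δ). -/

import Mathlib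

open MeasureTheory Finset

private lemma exp_le_one_add (x : ℝ) (h0 : 0 ≤ x) (h1 : x ≤ 1) :
    Real.exp x ≤ 1 + x + x ^ 2 := by
  have h := Real.exp_bound' h0 h1 (n := 3) (by norm_num)
  simp [Finset.sum_range_succ, Nat.factorial] at h
  nlinarith [pow_le_pow_left₀ h0 h1 3, sq_nonneg x]

private lemma condexp_comp_arm {Ω : Type*} {mΩ : MeasurableSpace Ω} (μ : Measure Ω)
    [IsProbabilityMeasure μ] {K : ℕ} (f : Fin K → ℝ)
    (ℋ : Filtration ℕ mΩ) (arm : ℕ → Ω → Fin K)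
    (hmeas : ∀ t, Measurable[ℋ (t+1)] (arm (t+1)))
    (hlaw : ∀ t a, μ[fun ω => if arm (t+1) ω = a then (1:ℝ) else 0 | ℋ t]
      =ᵐ[μ] fun _ => f a) (t : ℕ) (g : Fin K → ℝ) :
    μ[fun ω => g (arm (t+1) ω) | ℋ t] =ᵐ[μ] fun _ => ∑ a, g a * f a := by
  set ind : Fin K → Ω → ℝ := fun a ω => if arm (t+1) ω = a then (1:ℝ) else 0 with hind
  have harm : Measurable (arm (t+1)) := (hmeas t).mono (ℋ.le (t+1)) le_rfl
  have hindint : ∀ a, Integrable (ind a) μ := by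
    intro a
    refine Integrable.mono' (integrable_const (1:ℝ))
      ((measurable_of_countable (fun b => if b = a then (1:ℝ) else 0)).comp
        harm).aestronglyMeasurable (ae_of_all _ fun ω => ?_)
    simp only [hind, Function.comp]
    split <;> simp
  have hfun : (fun ω => g (arm (t+1) ω)) = ∑ a : Fin K, g a • ind a := by
    funext ω
    simp only [Finset.sum_apply, Pi.smul_apply, hind, smul_eq_mul, mul_ite, mul_one, mul_zero]
    rw [Finset.sum_ite_eq univ (arm (t+1) ω) g]
    simp
  have h1 : ∀ᵐ ω ∂μ, ∀ a, (μ[g a • ind a | ℋ t]) ω = g a * (μ[ind a | ℋ t]) ω :=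
    ae_all_iff.2 fun a => (condExp_smul (g a) (ind a) (ℋ t)).mono fun ω h => by simpa using h
  have h2 : ∀ᵐ ω ∂μ, ∀ a, (μ[ind a | ℋ t]) ω = f a := ae_all_iff.2 fun a => hlaw t a
  have h3 := condExp_finsetSum (m := ℋ t) (μ := μ) (s := univ)
    (f := fun a => g a • ind a) (fun a _ => (hindint a).smul (g a))
  rw [hfun]
  filter_upwards [h3, h1, h2] with ω h3 h1 h2
  rw [h3, Finset.sum_apply]
  exact Finset.sum_congr rfl fun a _ => by rw [h1 a, h2 a]

/-- Bounds on sums of inverse observation probabilities, and the Freedman consequence. -/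
theorem stmt_11 {Ω : Type*} {mΩ : MeasurableSpace Ω} (μ : Measure Ω) [IsProbabilityMeasure μ]
    (K n : ℕ) (hK : 0 < K) (γ : ℝ) (hγ : 0 < γ)
    (f : Fin K → ℝ) (hf : ∀ a, 0 ≤ f a) (hfsum : ∑ a, f a ≤ 1)
    (ℋ : Filtration ℕ mΩ) (arm : ℕ → Ω → Fin K)
    (hmeas : ∀ t, Measurable[ℋ (t+1)] (arm (t+1)))
    (hlaw : ∀ t a, μ[fun ω => if arm (t+1) ω = a then (1:ℝ) else 0 | ℋ t]
      =ᵐ[μ] fun _ => f a)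
    (δ : ℝ) (hδ : δ ∈ Set.Ioo (0:ℝ) 1) :
    (∀ᵐ ω ∂μ, ∑ t ∈ Finset.range n,
        (μ[fun ω' => 1 / (f (arm (t+1) ω') + γ) | ℋ t]) ω ≤ K * n) ∧
    (∀ t ω, 1 / (f (arm (t+1) ω) + γ) ≤ 1 / γ) ∧
    (∀ t, ∀ᵐ ω ∂μ, (μ[fun ω' => (1 / (f (arm (t+1) ω') + γ))^2 | ℋ t]) ω
        ≤ ∑ a, 1 / (f a + γ)) ∧
    μ {ω | ∑ t ∈ Finset.range n, 1 / (f (arm (t+1) ω) + γ)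
        ≤ 2 * K * n + (1/γ) * Real.log (1/δ)} ≥ ENNReal.ofReal (1 - δ) := by
  obtain ⟨hδ0, hδ1⟩ := hδ
  have hd : ∀ a : Fin K, 0 < f a + γ := fun a => by linarith [hf a]
  have hratio : ∀ a : Fin K, 1 / (f a + γ) * f a ≤ 1 := fun a => by
    rw [one_div_mul_eq_div, div_le_one (hd a)]; linarith
  have hXle0 : ∀ a : Fin K, 1 / (f a + γ) ≤ 1 / γ := fun a =>
    one_div_le_one_div_of_le hγ (by linarith [hf a])
  have hXpos0 : ∀ a : Fin K, 0 < 1 / (f a + γ) := fun a => one_div_pos.2 (hd a)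
  refine ⟨?_, fun t ω => hXle0 _, ?_, ?_⟩
  · -- Part 1
    have key1 : ∀ t : ℕ, μ[fun ω' => 1 / (f (arm (t+1) ω') + γ) | ℋ t]
        =ᵐ[μ] fun _ => ∑ a, (1 / (f a + γ)) * f a := fun t =>
      condexp_comp_arm μ f ℋ arm hmeas hlaw t (fun a => 1 / (f a + γ))
    have hc1 : ∑ a, (1 / (f a + γ)) * f a ≤ (K : ℝ) := by
      calc ∑ a, 1 / (f a + γ) * f a ≤ ∑ _a : Fin K, (1:ℝ) :=
            Finset.sum_le_sum fun a _ => hratio a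
        _ = K := by simp
    filter_upwards [ae_all_iff.2 key1] with ω h
    calc ∑ t ∈ range n, (μ[fun ω' => 1 / (f (arm (t+1) ω') + γ) | ℋ t]) ω
        = ∑ t ∈ range n, ∑ a, (1 / (f a + γ)) * f a :=
          Finset.sum_congr rfl fun t _ => h t
      _ ≤ ∑ _t ∈ range n, (K : ℝ) := Finset.sum_le_sum fun t _ => hc1
      _ = (K : ℝ) * n := by simp [mul_comm]
  · -- Part 3
    intro t
    have key3 := condexp_comp_arm μ f ℋ arm hmeas hlaw t (fun a => (1 / (f a + γ))^2)
    have hc3 : ∑ a, (1 / (f a + γ))^2 * f a ≤ ∑ a, 1 / (f a + γ) := by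
      refine Finset.sum_le_sum fun a _ => ?_
      calc (1 / (f a + γ))^2 * f a = (1 / (f a + γ)) * ((1 / (f a + γ)) * f a) := by ring
        _ ≤ (1 / (f a + γ)) * 1 := mul_le_mul_of_nonneg_left (hratio a) (hXpos0 a).le
        _ = 1 / (f a + γ) := mul_one _
    filter_upwards [key3] with ω h
    rw [h]; exact hc3
  · -- Part 4
    set X : ℕ → Ω → ℝ := fun t ω => 1 / (f (arm (t+1) ω) + γ) with hX
    have hXm : ∀ t, Measurable (X t) := fun t =>
      (measurable_of_countable fun a => 1 / (f a + γ)).comp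
        ((hmeas t).mono (ℋ.le (t+1)) le_rfl)
    set M : ℕ → Ω → ℝ := fun m ω => Real.exp (γ * ∑ t ∈ range m, X t ω) with hM
    have hMpos : ∀ m ω, 0 < M m ω := fun m ω => Real.exp_pos _
    have hMm : ∀ m, Measurable (M m) := fun m =>
      Real.measurable_exp.comp (measurable_const.mul
        (Finset.measurable_sum _ fun t _ => hXm t))
    have hMbd : ∀ m ω, |M m ω| ≤ Real.exp m := by
      intro m ω
      rw [abs_of_pos (hMpos m ω)]
      apply Real.exp_le_exp.2
      calc γ * ∑ t ∈ range m, X t ω ≤ γ * ∑ _t ∈ range m, 1/γ :=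
            mul_le_mul_of_nonneg_left (Finset.sum_le_sum fun t _ => hXle0 _) hγ.le
        _ = m := by rw [Finset.sum_const, card_range, nsmul_eq_mul]; field_simp
    have hMint : ∀ m, Integrable (M m) μ := fun m =>
      Integrable.mono' (integrable_const _) (hMm m).aestronglyMeasurable
        (ae_of_all _ (hMbd m))
    have hMsm : ∀ m, StronglyMeasurable[ℋ m] (M m) := by
      intro m
      apply Measurable.stronglyMeasurable
      exact Real.measurable_exp.comp (measurable_const.mul
        (Finset.measurable_sum _ fun t ht =>
          (measurable_of_countable fun a => 1 / (f a + γ)).comp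
            ((hmeas t).mono (ℋ.mono (mem_range.1 ht)) le_rfl)))
    set c : ℝ := ∑ a, Real.exp (γ * (1 / (f a + γ))) * f a with hc
    have hGc : ∀ m : ℕ, μ[fun ω => Real.exp (γ * X m ω) | ℋ m] =ᵐ[μ] fun _ => c := fun m =>
      condexp_comp_arm μ f ℋ arm hmeas hlaw m (fun a => Real.exp (γ * (1 / (f a + γ))))
    have hc0 : 0 ≤ c := Finset.sum_nonneg fun a _ =>
      mul_nonneg (Real.exp_pos _).le (hf a)
    have hcbd : c ≤ 1 + 2*γ*K := by
      have hterm : ∀ a : Fin K, Real.exp (γ * (1 / (f a + γ))) * f a ≤ f a + 2*γ := by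
        intro a
        set x : ℝ := γ * (1 / (f a + γ)) with hx
        have hx0 : 0 ≤ x := by rw [hx]; exact mul_nonneg hγ.le (hXpos0 a).le
        have hx1 : x ≤ 1 := by rw [hx, mul_one_div, div_le_one (hd a)]; linarith [hf a]
        have hxe : x * (f a + γ) = γ := by
          rw [hx, mul_one_div, div_mul_cancel₀ _ (hd a).ne']
        have he := exp_le_one_add x hx0 hx1
        have h2 : (1 + x + x^2) * f a ≤ f a + 2*γ := by
          nlinarith [hxe, hf a, hγ, sq_nonneg x, mul_nonneg hγ.le (sq_nonneg x),
            mul_nonneg (hf a) hx0]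
        calc Real.exp x * f a ≤ (1 + x + x^2) * f a :=
              mul_le_mul_of_nonneg_right he (hf a)
          _ ≤ f a + 2*γ := h2
      calc c ≤ ∑ a, (f a + 2*γ) := Finset.sum_le_sum fun a _ => hterm a
        _ = (∑ a, f a) + (K : ℝ) * (2*γ) := by
            rw [Finset.sum_add_distrib, Finset.sum_const, card_univ, Fintype.card_fin,
              nsmul_eq_mul]
        _ ≤ 1 + 2*γ*K := by linarith
    have hint : ∀ m, ∫ ω, M m ω ∂μ ≤ (1 + 2*γ*K)^m := by
      intro m
      induction m with
      | zero => simp [hM]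
      | succ m ih =>
        have hsplit : M (m+1) = M m * fun ω => Real.exp (γ * X m ω) := by
          funext ω
          simp only [hM, Pi.mul_apply]
          rw [Finset.sum_range_succ, mul_add, Real.exp_add]
        have hintG : Integrable (fun ω => Real.exp (γ * X m ω)) μ := by
          refine Integrable.mono' (integrable_const (Real.exp 1))
            (Real.measurable_exp.comp (measurable_const.mul (hXm m))).aestronglyMeasurable
            (ae_of_all _ fun ω => ?_)
          rw [Real.norm_eq_abs, abs_of_pos (Real.exp_pos _)]
          apply Real.exp_le_exp.2
          calc γ * X m ω ≤ γ * (1/γ) := mul_le_mul_of_nonneg_left (hXle0 _) hγ.le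
            _ = 1 := by field_simp
        have hintMG : Integrable (M m * fun ω => Real.exp (γ * X m ω)) μ := by
          rw [← hsplit]; exact hMint (m+1)
        have hce : μ[M m * fun ω => Real.exp (γ * X m ω) | ℋ m]
            =ᵐ[μ] fun ω => M m ω * c := by
          refine (condExp_mul_of_stronglyMeasurable_left (hMsm m) hintMG hintG).trans ?_
          filter_upwards [hGc m] with ω h
          simp only [Pi.mul_apply, h]
        have hnn : 0 ≤ ∫ ω, M m ω ∂μ := integral_nonneg fun ω => (hMpos m ω).le
        calc ∫ ω, M (m+1) ω ∂μ
            = ∫ ω, (M m * fun ω => Real.exp (γ * X m ω)) ω ∂μ := by rw [hsplit]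
          _ = ∫ ω, (μ[M m * fun ω => Real.exp (γ * X m ω) | ℋ m]) ω ∂μ :=
              (integral_condExp (ℋ.le m)).symm
          _ = ∫ ω, M m ω * c ∂μ := integral_congr_ae hce
          _ = (∫ ω, M m ω ∂μ) * c := integral_mul_const c (M m)
          _ ≤ (1 + 2*γ*K)^m * (1 + 2*γ*K) := mul_le_mul ih hcbd hc0 (by positivity)
          _ = (1 + 2*γ*K)^(m+1) := (pow_succ _ m).symm
    set B : ℝ := 2 * K * n + (1/γ) * Real.log (1/δ) with hB
    have hSm : Measurable (fun ω => ∑ t ∈ range n, X t ω) :=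
      Finset.measurable_sum _ fun t _ => hXm t
    have hεB : Real.exp (γ * B) = Real.exp (2*γ*K*n) * (1/δ) := by
      rw [hB, mul_add, Real.exp_add]
      congr 1
      · congr 1; ring
      · rw [show γ * ((1/γ) * Real.log (1/δ)) = Real.log (1/δ) by field_simp]
        exact Real.exp_log (by positivity)
    have hpow : (1 + 2*γ*K)^n ≤ Real.exp (2*γ*K*n) := by
      calc (1 + 2*γ*K)^n ≤ (Real.exp (2*γ*K))^n := by
            apply pow_le_pow_left₀ (by positivity)
            linarith [Real.add_one_le_exp (2*γ*(K:ℝ))]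
        _ = Real.exp (2*γ*K*n) := by rw [← Real.exp_nat_mul]; ring_nf
    have hmark := mul_meas_ge_le_integral_of_nonneg
      (ae_of_all μ fun ω => (hMpos n ω).le) (hMint n) (Real.exp (γ * B))
    have hsub : {ω | B < ∑ t ∈ range n, X t ω} ⊆ {ω | Real.exp (γ*B) ≤ M n ω} := by
      intro ω h
      exact Real.exp_le_exp.2 (mul_le_mul_of_nonneg_left (le_of_lt h) hγ.le)
    have htail : μ {ω | B < ∑ t ∈ range n, X t ω} ≤ ENNReal.ofReal δ := by
      have h1 : μ {ω | B < ∑ t ∈ range n, X t ω}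
          ≤ μ {ω | Real.exp (γ*B) ≤ M n ω} := measure_mono hsub
      have hfin : μ {ω | Real.exp (γ*B) ≤ M n ω} ≠ ⊤ := measure_ne_top μ _
      have h2 : (μ {ω | Real.exp (γ*B) ≤ M n ω}).toReal ≤ δ := by
        set T : ℝ := (μ {ω | Real.exp (γ*B) ≤ M n ω}).toReal with hT
        have hT0 : 0 ≤ T := ENNReal.toReal_nonneg
        have hE : (0:ℝ) < Real.exp (2*γ*K*n) := Real.exp_pos _
        have h3 : Real.exp (γ*B) * T ≤ Real.exp (2*γ*K*n) :=
          le_trans hmark (le_trans (hint n) hpow)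
        rw [hεB] at h3
        have h4 : (1/δ) * T ≤ 1 :=
          le_of_mul_le_mul_left (by rw [← mul_assoc, mul_one]; exact h3) hE
        rw [one_div_mul_eq_div, div_le_one hδ0] at h4
        exact h4
      exact le_trans h1 ((ENNReal.le_ofReal_iff_toReal_le hfin hδ0.le).2 h2)
    have hms : MeasurableSet {ω | B < ∑ t ∈ range n, X t ω} :=
      measurableSet_lt measurable_const hSm
    have hset : {ω | ∑ t ∈ range n, X t ω ≤ B}
        = {ω | B < ∑ t ∈ range n, X t ω}ᶜ := by
      ext ω; simp [not_lt]
    show ENNReal.ofReal (1 - δ) ≤ μ {ω | ∑ t ∈ range n, X t ω ≤ B}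
    rw [hset, measure_compl hms (measure_ne_top μ _), measure_univ]
    calc ENNReal.ofReal (1 - δ) = 1 - ENNReal.ofReal δ := by
          rw [ENNReal.ofReal_sub 1 hδ0.le, ENNReal.ofReal_one]
      _ ≤ 1 - μ {ω | B < ∑ t ∈ range n, X t ω} := tsub_le_tsub_left htail 1
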